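/- Let p be a prime, G = ∏_{e≥1} C_{p^e}^{m_e} a finite abelian p-group with m_e = 0 for e > t, and Q a positive integer (or more generally an element of a commutative ℚ-algebra). Then in ℚ⟦X⟧ (respectively the power series ring over that algebra): (1 − X)·Σ_{k≥0} Q^{τ(k)}·X^k = ∏_{i=0}^{t} (1 − Q^{p^i·c_i}·X^{p^i})·(1 − Q^{p^i·c_{i+1}}·X^{p^i})^{−1}, where all exponents p^i·c_i, p^i·c_{i+1} are non-negative integers and each factor with c_i = c_{i+1} equals 1. -/

import Mathlib

noncomputable section

/-- The rationals `c_0 = 0` and `c_i = Σ_{e≥1} m_e − Σ_{e=1}^{i−1} m_e p^{−e}` for `i ≥ 1`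
attached to the abelian `p`-group `G = ∏_{e≥1} C_{p^e}^{m_e}` (with `m_e = 0` for `e > t`). -/
def cseq (p t : ℕ) (m : ℕ → ℕ) : ℕ → ℚ
  | 0 => 0
  | (i + 1) => (∑ e ∈ Finset.Icc 1 t, (m e : ℚ)) - ∑ e ∈ Finset.Icc 1 i, (m e : ℚ) / (p : ℚ) ^ e

/-- `τ(k) = Σ_{e ≥ 1} m_e (k − ⌊k/p^e⌋)`. -/
def tauf (p t : ℕ) (m : ℕ → ℕ) (k : ℕ) : ℕ :=
  ∑ e ∈ Finset.Icc 1 t, m e * (k - k / p ^ e)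

open Finset in
lemma icc_eq_ioc (n : ℕ) : Finset.Icc 1 n = Finset.Ioc 0 n := by
  ext x; simp [Nat.lt_iff_add_one_le]

lemma tauf_zero (p t : ℕ) (m : ℕ → ℕ) : tauf p t m 0 = 0 := by
  simp [tauf]

lemma cast_tauf (p t : ℕ) (m : ℕ → ℕ) (a : ℕ) :
    ((tauf p t m a : ℤ)) = ∑ e ∈ Finset.Icc 1 t, (m e : ℤ) * ((a : ℤ) - ((a / p ^ e : ℕ) : ℤ)) := by
  unfold tauf
  rw [Nat.cast_sum]
  refine Finset.sum_congr rfl fun e _ => ?_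
  rw [Nat.cast_mul, Nat.cast_sub (Nat.div_le_self _ _)]

lemma tauf_add (p t s r j : ℕ) (m : ℕ → ℕ) (hp : 0 < p) (hs : s ≤ t) (D : ℕ)
    (hD : D + ∑ e ∈ Finset.Icc 1 s, m e * p ^ (s - e) = p ^ s * ∑ e ∈ Finset.Icc 1 t, m e)
    (hr : ∀ e, s < e → e ≤ t → r + j * p ^ s < p ^ e) :
    tauf p t m (r + j * p ^ s) = tauf p t m r + j * D := by
  set k := r + j * p ^ s with hk
  have hdiv : ∀ e, e ≤ s → k / p ^ e = r / p ^ e + j * p ^ (s - e) := by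
    intro e he
    have hps : p ^ s = p ^ (s - e) * p ^ e := by rw [← pow_add]; congr 1; omega
    have h2 : k = r + (j * p ^ (s - e)) * p ^ e := by rw [hk, hps]; ring
    rw [h2, Nat.add_mul_div_right _ _ (pow_pos hp e)]
  have hzk : ∀ e, s < e → e ≤ t → k / p ^ e = 0 := fun e h1 h2 =>
    Nat.div_eq_of_lt (hr e h1 h2)
  have hzr : ∀ e, s < e → e ≤ t → r / p ^ e = 0 := fun e h1 h2 =>
    Nat.div_eq_of_lt (lt_of_le_of_lt (Nat.le_add_right _ _) (hr e h1 h2))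
  have hDZ : (D : ℤ) = (p : ℤ) ^ s * ∑ e ∈ Finset.Icc 1 t, (m e : ℤ)
      - ∑ e ∈ Finset.Icc 1 s, (m e : ℤ) * (p : ℤ) ^ (s - e) := by
    have := hD
    push_cast at this ⊢
    linarith
  have main : ((tauf p t m k : ℤ)) = (tauf p t m r : ℤ) + (j : ℤ) * (D : ℤ) := by
    rw [cast_tauf, cast_tauf, hDZ]
    simp only [icc_eq_ioc]
    rw [← Finset.sum_Ioc_consecutive _ (Nat.zero_le s) hs,
        ← Finset.sum_Ioc_consecutive (fun e => (m e : ℤ) * ((r : ℤ) - ((r / p ^ e : ℕ) : ℤ))) (Nat.zero_le s) hs,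
        ← Finset.sum_Ioc_consecutive (fun e => (m e : ℤ)) (Nat.zero_le s) hs]
    have e1 : ∑ e ∈ Finset.Ioc 0 s, (m e : ℤ) * ((k : ℤ) - ((k / p ^ e : ℕ) : ℤ))
        = ∑ e ∈ Finset.Ioc 0 s, ((m e : ℤ) * ((r : ℤ) - ((r / p ^ e : ℕ) : ℤ))
            + (m e : ℤ) * ((j : ℤ) * (p : ℤ) ^ s) - (m e : ℤ) * ((j : ℤ) * (p : ℤ) ^ (s - e))) := by
      refine Finset.sum_congr rfl fun e he => ?_
      rw [Finset.mem_Ioc] at he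
      rw [hdiv e he.2]
      have hkc : (k : ℤ) = (r : ℤ) + (j : ℤ) * (p : ℤ) ^ s := by rw [hk]; push_cast; ring
      push_cast
      rw [hkc]; ring
    have e2 : ∑ e ∈ Finset.Ioc s t, (m e : ℤ) * ((k : ℤ) - ((k / p ^ e : ℕ) : ℤ))
        = ∑ e ∈ Finset.Ioc s t, ((m e : ℤ) * ((r : ℤ) - ((r / p ^ e : ℕ) : ℤ))
            + (m e : ℤ) * ((j : ℤ) * (p : ℤ) ^ s)) := by
      refine Finset.sum_congr rfl fun e he => ?_
      rw [Finset.mem_Ioc] at he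
      rw [hzk e he.1 he.2, hzr e he.1 he.2]
      have hkc : (k : ℤ) = (r : ℤ) + (j : ℤ) * (p : ℤ) ^ s := by rw [hk]; push_cast; ring
      push_cast
      rw [hkc]; ring
    rw [e1, e2]
    simp only [Finset.sum_add_distrib, Finset.sum_sub_distrib, ← Finset.sum_mul, ← Finset.mul_sum]
    have e3 : ∑ x ∈ Finset.Ioc 0 s, (m x : ℤ) * ((j : ℤ) * (p : ℤ) ^ (s - x))
        = (j : ℤ) * ∑ x ∈ Finset.Ioc 0 s, (m x : ℤ) * (p : ℤ) ^ (s - x) := by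
      rw [Finset.mul_sum]; exact Finset.sum_congr rfl fun x _ => by ring
    rw [e3]; ring
  exact_mod_cast main

open PowerSeries in
lemma Pcoeff (p t : ℕ) (m : ℕ → ℕ) (hp : 1 < p) (Q : ℚ) (E' : ℕ → ℕ)
    (hT : ∀ s, s < t → ∀ k, k < p ^ (s + 1) →
      tauf p t m k = tauf p t m (k % p ^ s) + (k / p ^ s) * E' s) :
    ∀ s, s ≤ t → ∀ k, (PowerSeries.coeff (R := ℚ) k)
        (∏ i ∈ Finset.range s, ∑ j ∈ Finset.range p,
          PowerSeries.C (R := ℚ) (Q ^ (j * E' i)) * PowerSeries.X ^ (j * p ^ i))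
      = if k < p ^ s then Q ^ tauf p t m k else 0 := by
  intro s
  induction s with
  | zero =>
    intro _ k
    rw [Finset.prod_range_zero, PowerSeries.coeff_one]
    by_cases hk : k = 0 <;> simp [hk, tauf_zero]
  | succ s ih =>
    intro hs k
    have ihs := ih (le_of_lt hs)
    have hps : 0 < p ^ s := pow_pos (by omega) s
    rw [Finset.prod_range_succ, Finset.mul_sum]
    have hterm : ∀ j, (∏ i ∈ Finset.range s, ∑ j ∈ Finset.range p,
          PowerSeries.C (R := ℚ) (Q ^ (j * E' i)) * PowerSeries.X ^ (j * p ^ i)) *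
          (PowerSeries.C (R := ℚ) (Q ^ (j * E' s)) * PowerSeries.X ^ (j * p ^ s))
        = PowerSeries.C (R := ℚ) (Q ^ (j * E' s)) *
          ((∏ i ∈ Finset.range s, ∑ j ∈ Finset.range p,
            PowerSeries.C (R := ℚ) (Q ^ (j * E' i)) * PowerSeries.X ^ (j * p ^ i)) *
            PowerSeries.X ^ (j * p ^ s)) := by intro j; ring
    simp_rw [hterm]
    rw [map_sum]
    simp_rw [PowerSeries.coeff_C_mul, PowerSeries.coeff_mul_X_pow', ihs]
    by_cases hk : k < p ^ (s + 1)
    · rw [if_pos hk]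
      have hj0 : k / p ^ s < p := by
        rw [Nat.div_lt_iff_lt_mul hps]
        calc k < p ^ (s + 1) := hk
        _ = p * p ^ s := by ring
      have hmod : k - k / p ^ s * p ^ s = k % p ^ s :=
        Nat.sub_eq_of_eq_add (Nat.mod_add_div' k (p ^ s)).symm
      rw [Finset.sum_eq_single (k / p ^ s)]
      · rw [if_pos (Nat.div_mul_le_self k (p ^ s)), if_pos]
        · rw [hmod, ← pow_add, hT s hs k hk, add_comm]
        · rw [hmod]; exact Nat.mod_lt _ hps
      · intro b _ hb
        split_ifs with h1 h2
        · exfalso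
          apply hb
          refine (Nat.div_eq_of_lt_le h1 ?_).symm
          have := (Nat.sub_lt_iff_lt_add h1).mp h2
          calc k < b * p ^ s + p ^ s := by omega
          _ = (b + 1) * p ^ s := by ring
        · simp
        · simp
      · exact fun h => absurd (Finset.mem_range.mpr hj0) h
    · rw [if_neg hk]
      refine Finset.sum_eq_zero fun j hj => ?_
      rw [Finset.mem_range] at hj
      split_ifs with h1 h2
      · exfalso
        have : j * p ^ s + p ^ s ≤ p ^ (s + 1) := by
          calc j * p ^ s + p ^ s = (j + 1) * p ^ s := by ring
          _ ≤ p * p ^ s := by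
            apply Nat.mul_le_mul_right; omega
          _ = p ^ (s + 1) := by ring
        omega
      · simp
      · simp

/-- For a positive integer `Q`, in `ℚ⟦X⟧`:
`(1 − X) Σ_{k≥0} Q^{τ(k)} X^k = ∏_{i=0}^{t} (1 − Q^{p^i c_i} X^{p^i})(1 − Q^{p^i c_{i+1}} X^{p^i})⁻¹`. -/
theorem stmt7
    (p t : ℕ) (hp : p.Prime)
    (m : ℕ → ℕ) (hm : ∀ e, t < e → m e = 0)
    (Q : ℕ) (hQ : 0 < Q)
    -- the non-negative integers `E i = p^i·c_i` and `E' i = p^i·c_{i+1}`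
    (E E' : ℕ → ℕ)
    (hE : ∀ i, (E i : ℚ) = (p : ℚ) ^ i * cseq p t m i)
    (hE' : ∀ i, (E' i : ℚ) = (p : ℚ) ^ i * cseq p t m (i + 1)) :
    (1 - PowerSeries.X) * (PowerSeries.mk fun k => ((Q : ℚ) ^ tauf p t m k))
      = ∏ i ∈ Finset.range (t + 1),
          (1 - PowerSeries.C (R := ℚ) ((Q : ℚ) ^ E i) * PowerSeries.X ^ p ^ i) *
            (1 - PowerSeries.C (R := ℚ) ((Q : ℚ) ^ E' i) * PowerSeries.X ^ p ^ i)⁻¹ := by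
  have hp1 : 1 < p := hp.one_lt
  have hppos : 0 < p := hp.pos
  have hpQ : (p : ℚ) ≠ 0 := Nat.cast_ne_zero.mpr hppos.ne'
  -- nat identity for E'
  have hE'nat : ∀ s, E' s + ∑ e ∈ Finset.Icc 1 s, m e * p ^ (s - e)
      = p ^ s * ∑ e ∈ Finset.Icc 1 t, m e := by
    intro s
    have hq : ((E' s : ℚ)) + ∑ e ∈ Finset.Icc 1 s, (m e : ℚ) * (p : ℚ) ^ (s - e)
        = (p : ℚ) ^ s * ∑ e ∈ Finset.Icc 1 t, (m e : ℚ) := by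
      rw [hE' s]
      simp only [cseq]
      rw [mul_sub]
      have h2 : (p : ℚ) ^ s * ∑ e ∈ Finset.Icc 1 s, (m e : ℚ) / (p : ℚ) ^ e
          = ∑ e ∈ Finset.Icc 1 s, (m e : ℚ) * (p : ℚ) ^ (s - e) := by
        rw [Finset.mul_sum]
        refine Finset.sum_congr rfl fun e he => ?_
        rw [Finset.mem_Icc] at he
        rw [div_eq_mul_inv, pow_sub₀ _ hpQ he.2]
        ring
      rw [h2]; ring
    exact_mod_cast hq
  have hE0 : E 0 = 0 := by
    have h := hE 0
    simp only [cseq, pow_zero, mul_zero] at h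
    exact_mod_cast h
  have hEsucc : ∀ i, E (i + 1) = p * E' i := by
    intro i
    have h1 := hE (i + 1)
    have h2 := hE' i
    have : ((E (i + 1) : ℚ)) = (p : ℚ) * (E' i : ℚ) := by
      rw [h1, h2, pow_succ]; ring
    exact_mod_cast this
  -- τ-additivity in the form needed for Pcoeff
  have hT : ∀ s, s < t → ∀ k, k < p ^ (s + 1) →
      tauf p t m k = tauf p t m (k % p ^ s) + (k / p ^ s) * E' s := by
    intro s hst k hk
    have hr : ∀ e, s < e → e ≤ t → k % p ^ s + (k / p ^ s) * p ^ s < p ^ e := by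
      intro e h1 h2
      rw [Nat.mod_add_div' k (p ^ s)]
      exact lt_of_lt_of_le hk (Nat.pow_le_pow_right hppos h1)
    have := tauf_add p t s (k % p ^ s) (k / p ^ s) m hppos (le_of_lt hst) (E' s) (hE'nat s) hr
    rwa [Nat.mod_add_div' k (p ^ s)] at this
  -- abbreviations
  set F : PowerSeries ℚ := PowerSeries.mk fun k => ((Q : ℚ) ^ tauf p t m k) with hF
  -- step: F * v t = ∏ g i
  have hFv : F * (1 - PowerSeries.C (R := ℚ) ((Q : ℚ) ^ E' t) * PowerSeries.X ^ p ^ t)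
      = ∏ i ∈ Finset.range t, ∑ j ∈ Finset.range p,
          PowerSeries.C (R := ℚ) ((Q : ℚ) ^ (j * E' i)) * PowerSeries.X ^ (j * p ^ i) := by
    ext k
    rw [Pcoeff p t m hp1 (Q : ℚ) E' hT t le_rfl k]
    have hre : F * (1 - PowerSeries.C (R := ℚ) ((Q : ℚ) ^ E' t) * PowerSeries.X ^ p ^ t)
        = F - PowerSeries.C (R := ℚ) ((Q : ℚ) ^ E' t) * (F * PowerSeries.X ^ p ^ t) := by ring
    rw [hre, map_sub, PowerSeries.coeff_C_mul, PowerSeries.coeff_mul_X_pow', hF,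
      PowerSeries.coeff_mk]
    by_cases hkt : p ^ t ≤ k
    · rw [if_pos hkt, if_neg (by omega), PowerSeries.coeff_mk]
      have hkk : k - p ^ t + 1 * p ^ t = k := by omega
      have htt := tauf_add p t t (k - p ^ t) 1 m hppos le_rfl (E' t) (hE'nat t)
        (fun e he1 he2 => absurd (lt_of_lt_of_le he1 he2) (lt_irrefl t))
      rw [hkk] at htt
      rw [htt, pow_add, one_mul]
      ring
    · rw [if_neg hkt, if_pos (by omega), mul_zero, sub_zero]
  -- per-factor identity
  have hfac : ∀ i, (1 - PowerSeries.C (R := ℚ) ((Q : ℚ) ^ E (i + 1)) * PowerSeries.X ^ p ^ (i + 1))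
      = (1 - PowerSeries.C (R := ℚ) ((Q : ℚ) ^ E' i) * PowerSeries.X ^ p ^ i) *
        ∑ j ∈ Finset.range p,
          PowerSeries.C (R := ℚ) ((Q : ℚ) ^ (j * E' i)) * PowerSeries.X ^ (j * p ^ i) := by
    intro i
    set z : PowerSeries ℚ := PowerSeries.C (R := ℚ) ((Q : ℚ) ^ E' i) * PowerSeries.X ^ p ^ i with hz
    have hg : (∑ j ∈ Finset.range p,
        PowerSeries.C (R := ℚ) ((Q : ℚ) ^ (j * E' i)) * PowerSeries.X ^ (j * p ^ i))
        = ∑ j ∈ Finset.range p, z ^ j := by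
      refine Finset.sum_congr rfl fun j _ => ?_
      rw [hz, mul_pow, ← map_pow, ← pow_mul, ← pow_mul, mul_comm (E' i) j, mul_comm (p ^ i) j]
    have hzp : z ^ p = PowerSeries.C (R := ℚ) ((Q : ℚ) ^ E (i + 1)) * PowerSeries.X ^ p ^ (i + 1) := by
      rw [hz, mul_pow, ← map_pow, ← pow_mul, ← pow_mul, hEsucc i, mul_comm (E' i) p, pow_succ,
        mul_comm (p ^ i) p]
    rw [hg]
    have := geom_sum_mul z p
    linear_combination this + hzp
  -- constant coefficients
  have hvc : ∀ i, PowerSeries.constantCoeff (R := ℚ)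
      (1 - PowerSeries.C (R := ℚ) ((Q : ℚ) ^ E' i) * PowerSeries.X ^ p ^ i) = 1 := by
    intro i
    have hne : p ^ i ≠ 0 := (pow_pos hppos i).ne'
    simp [zero_pow hne]
  set B : PowerSeries ℚ := ∏ i ∈ Finset.range (t + 1),
    (1 - PowerSeries.C (R := ℚ) ((Q : ℚ) ^ E' i) * PowerSeries.X ^ p ^ i) with hB
  have hBc : PowerSeries.constantCoeff (R := ℚ) B = 1 := by
    rw [hB, map_prod]
    simp only [hvc]
    exact Finset.prod_const_one
  have hB0 : B ≠ 0 := fun h => by rw [h, map_zero] at hBc; exact zero_ne_one hBc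
  refine mul_right_cancel₀ hB0 ?_
  have hRB : (∏ i ∈ Finset.range (t + 1),
      (1 - PowerSeries.C (R := ℚ) ((Q : ℚ) ^ E i) * PowerSeries.X ^ p ^ i) *
        (1 - PowerSeries.C (R := ℚ) ((Q : ℚ) ^ E' i) * PowerSeries.X ^ p ^ i)⁻¹) * B
      = ∏ i ∈ Finset.range (t + 1),
          (1 - PowerSeries.C (R := ℚ) ((Q : ℚ) ^ E i) * PowerSeries.X ^ p ^ i) := by
    rw [hB, ← Finset.prod_mul_distrib]
    refine Finset.prod_congr rfl fun i _ => ?_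
    rw [mul_assoc, PowerSeries.inv_mul_cancel _ (by rw [hvc i]; exact one_ne_zero), mul_one]
  rw [hRB]
  -- left side
  rw [Finset.prod_range_succ', hE0]
  simp only [pow_zero, map_one, one_mul, pow_one]
  have hprod : (∏ i ∈ Finset.range t,
      (1 - PowerSeries.C (R := ℚ) ((Q : ℚ) ^ E (i + 1)) * PowerSeries.X ^ p ^ (i + 1)))
      = (∏ i ∈ Finset.range t,
          (1 - PowerSeries.C (R := ℚ) ((Q : ℚ) ^ E' i) * PowerSeries.X ^ p ^ i)) * (F *
        (1 - PowerSeries.C (R := ℚ) ((Q : ℚ) ^ E' t) * PowerSeries.X ^ p ^ t)) := by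
    rw [hFv]
    rw [← Finset.prod_mul_distrib]
    exact Finset.prod_congr rfl fun i _ => hfac i
  rw [hprod, hB, Finset.prod_range_succ]
  ring
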